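/- Suppose X ⊆ 2^ω is nice (for every Borel function x ↦ f^x ∈ ω^ω there exists g with ∀x∈X ∃^∞n f^x(n)=g(n)). Then for every Borel mapping x ↦ Y^x ∈ [ω]^ω there exists an infinite set Y = {u_0 < u_1 < ...} ⊆ ω with u_{n+1} ≥ u_n + 2 for all n, such that Y ∩ Y^x is infinite for every x ∈ X. -/

import Mathlib

lemma meas_nth {Y : (ℕ → Bool) → ℕ → Bool} (hY : Measurable Y)
    (hYinf : ∀ x, {n : ℕ | Y x n = true}.Infinite) (k : ℕ) :
    Measurable fun x => Nat.nth (fun m => Y x m = true) k := by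
  apply measurable_to_countable'
  intro m
  have hset : {x | Nat.nth (fun m => Y x m = true) k = m}
      = (fun (x : ℕ → Bool) (j : Fin (m+1)) => Y x j) ⁻¹'
        {v : Fin (m+1) → Bool | v (Fin.last m) = true ∧
          Nat.count (fun j => v ⟨j % (m+1), Nat.mod_lt _ m.succ_pos⟩ = true) m = k} := by
    ext x
    simp only [Set.mem_setOf_eq, Set.mem_preimage, Fin.val_last]
    have hcount : Nat.count
        (fun j => Y x ((⟨j % (m+1), Nat.mod_lt _ m.succ_pos⟩ : Fin (m+1)) : ℕ) = true) m
        = Nat.count (fun j => Y x j = true) m := by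
      simp only [Nat.count_eq_card_filter_range]
      congr 1
      apply Finset.filter_congr
      intro j hj
      rw [Finset.mem_range] at hj
      simp [Nat.mod_eq_of_lt (by omega : j < m + 1)]
    constructor
    · intro h
      refine ⟨h ▸ Nat.nth_mem_of_infinite (hYinf x) k, ?_⟩
      rw [hcount, ← h, Nat.count_nth_of_infinite (hYinf x)]
    · rintro ⟨h1, h2⟩
      rw [hcount] at h2
      rw [← h2]
      exact Nat.nth_count h1
  have : (fun x => Nat.nth (fun m => Y x m = true) k) ⁻¹' {m} = {x | Nat.nth (fun m => Y x m = true) k = m} := rfl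
  rw [this, hset]
  exact (measurable_pi_lambda _ fun j => (measurable_pi_apply _).comp hY)
    (Set.toFinite _).measurableSet

private lemma le_foldr_max {l : List ℕ} {b : ℕ} (hb : b ∈ l) : b ≤ l.foldr max 0 := by
  induction l with
  | nil => simp at hb
  | cons a l ih =>
    simp only [List.foldr_cons]
    rcases List.mem_cons.mp hb with h | h
    · subst h; exact le_max_left _ _
    · exact (ih h).trans (le_max_right _ _)

/-- one step of the greedy choice -/
private noncomputable def stepFn (dl : ℕ → List ℕ) (n : ℕ) (prev : List ℕ) : ℕ :=
  if h : ∃ a ∈ dl n, ∀ b ∈ prev, b + 2 ≤ a ∨ a + 2 ≤ b then h.choose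
  else (prev.foldr max 0) + 2

/-- history of choices -/
private noncomputable def hist (dl : ℕ → List ℕ) : ℕ → List ℕ
  | 0 => []
  | n+1 => hist dl n ++ [stepFn dl n (hist dl n)]

private noncomputable def cfun (dl : ℕ → List ℕ) (n : ℕ) : ℕ := stepFn dl n (hist dl n)

private lemma hist_len (dl : ℕ → List ℕ) (n : ℕ) : (hist dl n).length = n := by
  induction n with
  | zero => rfl
  | succ n ih => simp [hist, ih]

private lemma cfun_mem_hist (dl : ℕ → List ℕ) {m n : ℕ} (h : m < n) :
    cfun dl m ∈ hist dl n := by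
  induction n with
  | zero => omega
  | succ n ih =>
    rw [hist]
    rcases Nat.lt_succ_iff_lt_or_eq.mp h with h' | h'
    · exact List.mem_append_left _ (ih h')
    · subst h'; simp [cfun]

private lemma cfun_gap (dl : ℕ → List ℕ) (n : ℕ) {b : ℕ} (hb : b ∈ hist dl n) :
    b + 2 ≤ cfun dl n ∨ cfun dl n + 2 ≤ b := by
  rw [cfun, stepFn]
  split_ifs with h
  · exact h.choose_spec.2 b hb
  · left
    have := le_foldr_max hb
    omega

private lemma cfun_gap' (dl : ℕ → List ℕ) {m n : ℕ} (h : m < n) :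
    cfun dl m + 2 ≤ cfun dl n ∨ cfun dl n + 2 ≤ cfun dl m :=
  cfun_gap dl n (cfun_mem_hist dl h)

private lemma cfun_inj (dl : ℕ → List ℕ) : Function.Injective (cfun dl) := by
  intro m n h
  by_contra hne
  rcases Nat.lt_or_ge m n with h' | h'
  · rcases cfun_gap' dl h' with h2 | h2 <;> omega
  · rcases cfun_gap' dl (show n < m by omega) with h2 | h2 <;> omega

private lemma cfun_mem_dl (dl : ℕ → List ℕ) (n : ℕ)
    (hex : ∃ a ∈ dl n, ∀ b ∈ hist dl n, b + 2 ≤ a ∨ a + 2 ≤ b) :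
    cfun dl n ∈ dl n := by
  rw [cfun, stepFn, dif_pos hex]
  exact hex.choose_spec.1

private lemma exists_good (dl : ℕ → List ℕ) (n : ℕ) (hnd : (dl n).Nodup)
    (hlen : (dl n).length = 3*n+1) :
    ∃ a ∈ dl n, ∀ b ∈ hist dl n, b + 2 ≤ a ∨ a + 2 ≤ b := by
  classical
  set B := (hist dl n).toFinset.biUnion (fun b => ({b-1, b, b+1} : Finset ℕ)) with hB
  have hBcard : B.card ≤ 3*n := by
    calc B.card ≤ ∑ b ∈ (hist dl n).toFinset, ({b-1,b,b+1} : Finset ℕ).card :=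
          Finset.card_biUnion_le
    _ ≤ ∑ b ∈ (hist dl n).toFinset, 3 := Finset.sum_le_sum (fun b _ => by
        have h1 := Finset.card_insert_le (b-1) ({b, b+1} : Finset ℕ)
        have h2 := Finset.card_insert_le b ({b+1} : Finset ℕ)
        simp at h1 h2 ⊢
        omega)
    _ = (hist dl n).toFinset.card * 3 := by rw [Finset.sum_const, smul_eq_mul]
    _ ≤ n * 3 := Nat.mul_le_mul_right 3 (le_trans (List.toFinset_card_le _)
          (le_of_eq (hist_len dl n)))
    _ = 3*n := by ring
  have hScard : (dl n).toFinset.card = 3*n+1 := by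
    rw [List.toFinset_card_of_nodup hnd, hlen]
  have hns : ¬ ((dl n).toFinset ⊆ B) := by
    intro hsub
    have := Finset.card_le_card hsub
    omega
  obtain ⟨a, haS, haB⟩ := Finset.not_subset.mp hns
  refine ⟨a, List.mem_toFinset.mp haS, fun b hb => ?_⟩
  have hmem : a ∉ ({b-1,b,b+1} : Finset ℕ) := fun h =>
    haB (Finset.mem_biUnion.mpr ⟨b, List.mem_toFinset.mpr hb, h⟩)
  simp only [Finset.mem_insert, Finset.mem_singleton] at hmem
  push_neg at hmem
  omega

/-- `X` is nice. -/
def Nice (X : Set (ℕ → Bool)) : Prop :=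
  ∀ f : (ℕ → Bool) → ℕ → ℕ, Measurable f →
    ∃ g : ℕ → ℕ, ∀ x ∈ X, {n : ℕ | f x n = g n}.Infinite

theorem nice_implies_sparse_diagonal_set (X : Set (ℕ → Bool)) (hX : Nice X)
    (Y : (ℕ → Bool) → ℕ → Bool) (hY : Measurable Y)
    (hYinf : ∀ x : ℕ → Bool, {n : ℕ | Y x n = true}.Infinite) :
    ∃ u : ℕ → ℕ, StrictMono u ∧ (∀ n, u n + 2 ≤ u (n + 1)) ∧
      ∀ x ∈ X, {k : ℕ | Y x (u k) = true}.Infinite := by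
  classical
  set e : (ℕ → Bool) → ℕ → ℕ := fun x k => Nat.nth (fun m => Y x m = true) k with he
  set f : (ℕ → Bool) → ℕ → ℕ :=
    fun x n => Encodable.encode (List.ofFn (fun i : Fin (3*n+1) => e x (n+1+i))) with hfdef
  have hfm : Measurable f := by
    apply measurable_pi_lambda
    intro n
    have hT : Measurable (fun x => (fun i : Fin (3*n+1) => e x (n+1+i))) :=
      measurable_pi_lambda _ fun i => meas_nth hY hYinf _
    exact (measurable_of_countable
      (fun v : Fin (3*n+1) → ℕ => Encodable.encode (List.ofFn v))).comp hT
  obtain ⟨g, hg⟩ := hX f hfm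
  set dl : ℕ → List ℕ := fun n => ((Encodable.decode (g n)) : Option (List ℕ)).getD [] with hdl
  set c : ℕ → ℕ := cfun dl with hc
  set p : ℕ → Prop := fun m => ∃ j, c j = m with hp
  have hpinf : (setOf p).Infinite := by
    have hr : setOf p = Set.range c := by
      ext m; simp only [hp, Set.mem_setOf_eq, Set.mem_range]; exact Iff.rfl
    rw [hr]
    exact Set.infinite_range_of_injective (cfun_inj dl)
  refine ⟨Nat.nth p, Nat.nth_strictMono hpinf, ?_, ?_⟩
  · intro n
    have h1 : Nat.nth p n < Nat.nth p (n+1) := Nat.nth_strictMono hpinf (Nat.lt_succ_self n)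
    obtain ⟨j, hj⟩ := Nat.nth_mem_of_infinite hpinf n
    obtain ⟨j', hj'⟩ := Nat.nth_mem_of_infinite hpinf (n+1)
    by_contra hcon
    have hjne : j ≠ j' := by intro h; rw [h, hj'] at hj; omega
    rcases Nat.lt_or_ge j j' with h' | h'
    · rcases cfun_gap' dl h' with h2 | h2 <;> rw [← hc] at h2 <;> omega
    · rcases cfun_gap' dl (show j' < j by omega) with h2 | h2 <;> rw [← hc] at h2 <;> omega
  · intro x hx
    have hM := hg x hx
    have hkey : ∀ n, f x n = g n → Y x (c n) = true := by
      intro n hn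
      have hdln : dl n = List.ofFn (fun i : Fin (3*n+1) => e x (n+1+i)) := by
        rw [hdl]
        simp only [← hn, hfdef]
        simp [Encodable.encodek]
      have hnd : (dl n).Nodup := by
        rw [hdln]
        refine List.nodup_ofFn.mpr ?_
        intro i i' hii
        have h2 : n+1+(i:ℕ) = n+1+(i':ℕ) :=
          (Nat.nth_strictMono (hYinf x)).injective hii
        exact Fin.ext (by omega)
      have hlen : (dl n).length = 3*n+1 := by rw [hdln]; simp
      have hex := exists_good dl n hnd hlen
      have hcmem : c n ∈ dl n := cfun_mem_dl dl n hex
      rw [hdln] at hcmem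
      obtain ⟨i, hi⟩ := List.mem_ofFn.mp hcmem
      rw [← hi]
      exact Nat.nth_mem_of_infinite (hYinf x) _
    by_contra hcon
    rw [Set.not_infinite] at hcon
    have himg : c '' {n | f x n = g n} ⊆ Nat.nth p '' {k | Y x (Nat.nth p k) = true} := by
      rintro _ ⟨n, hn, rfl⟩
      have hYc := hkey n hn
      have hpc : p (c n) := ⟨n, rfl⟩
      refine ⟨Nat.count p (c n), ?_, Nat.nth_count hpc⟩
      show Y x (Nat.nth p (Nat.count p (c n))) = true
      rw [Nat.nth_count hpc]
      exact hYc
    have h1 : (c '' {n | f x n = g n}).Infinite := hM.image ((cfun_inj dl).injOn)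
    exact h1 (Set.Finite.subset (hcon.image _) himg)
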